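/- Let Γ be a maximal consistent set in SLKVF_m, i an agent, G = Q × {0,1}, and F_i(Γ) the function domain defined from the dependency lattice of Γ and i. For σ ∈ 2^Q define v_σ : Q → G by v_σ(d) = ⟨d, σ(d)⟩. Then for every finite C ⊆ Q, d ∈ Q, and Σ ⊆ 2^Q: (1) if Σ satisfies the functionality condition for (C,d) (for all σ_1, σ_2 ∈ Σ, σ_1 and σ_2 agreeing on C implies they agree on d) and Kf_i(C,d) ∈ Γ, then there exists f ∈ F_i(Γ) with v_σ(d) = f(v_σ(C)) for all σ ∈ Σ; (2) if Kf_i(C,d) ∉ Γ, then for all σ ∈ Σ and all f ∈ F_i(Γ), v_σ(d) ≠ f(v_σ(C)). -/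

import Mathlib

open scoped Classical

/-! Multiagent language with operators `Kv_i`, `Kf_i` and `K_i`. -/

inductive MFormula (P Q A : Type) : Type where
  | top : MFormula P Q A
  | atom : P → MFormula P Q A
  | Kv : A → Q → MFormula P Q A
  | Kf : A → Finset Q → Q → MFormula P Q A
  | and : MFormula P Q A → MFormula P Q A → MFormula P Q A
  | not : MFormula P Q A → MFormula P Q A
  | K : A → MFormula P Q A → MFormula P Q A

namespace MFormula

variable {P Q A : Type}

/-- Material implication. -/
def imp (φ ψ : MFormula P Q A) : MFormula P Q A :=
  MFormula.not (MFormula.and φ (MFormula.not ψ))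

/-- Falsum. -/
def bot : MFormula P Q A := MFormula.not MFormula.top

end MFormula

variable {P Q A G : Type}

/-- Finite conjunction of a list of formulas. -/
def mconj : List (MFormula P Q A) → MFormula P Q A
  | [] => MFormula.top
  | φ :: l => MFormula.and φ (mconj l)

/-- `φ` is a propositional tautology. -/
def IsTautM (φ : MFormula P Q A) : Prop :=
  ∀ v : MFormula P Q A → Bool,
    v MFormula.top = true →
    (∀ α β, v (MFormula.and α β) = (v α && v β)) →
    (∀ α, v (MFormula.not α) = (! v α)) →
    v φ = true

section MAxioms

variable (P Q A : Type) [LinearOrder Q]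

/-- `⋀_{d ∈ D} Kf_i(C,d)`. -/
def mConjKf (i : A) (C D : Finset Q) : MFormula P Q A :=
  mconj ((D.sort (· ≤ ·)).map fun d => MFormula.Kf i C d)

/-- `⋀_{c ∈ C} Kv_i(c)`. -/
def mConjKv (i : A) (C : Finset Q) : MFormula P Q A :=
  mconj ((C.sort (· ≤ ·)).map fun c => MFormula.Kv i c)

/-- The axioms of the multiagent system `SLKVF_m`. -/
inductive SLKVFm : MFormula P Q A → Prop where
  | taut {φ : MFormula P Q A} : IsTautM φ → SLKVFm φ
  | axK (i : A) (φ ψ : MFormula P Q A) :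
      SLKVFm (MFormula.imp (MFormula.K i (MFormula.imp φ ψ))
        (MFormula.imp (MFormula.K i φ) (MFormula.K i ψ)))
  | axT (i : A) (φ : MFormula P Q A) : SLKVFm (MFormula.imp (MFormula.K i φ) φ)
  | ax4 (i : A) (φ : MFormula P Q A) :
      SLKVFm (MFormula.imp (MFormula.K i φ) (MFormula.K i (MFormula.K i φ)))
  | ax5 (i : A) (φ : MFormula P Q A) :
      SLKVFm (MFormula.imp (MFormula.not (MFormula.K i φ))
        (MFormula.K i (MFormula.not (MFormula.K i φ))))
  | kv4 (i : A) (d : Q) :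
      SLKVFm (MFormula.imp (MFormula.Kv i d) (MFormula.K i (MFormula.Kv i d)))
  | kv5 (i : A) (d : Q) :
      SLKVFm (MFormula.imp (MFormula.not (MFormula.Kv i d))
        (MFormula.K i (MFormula.not (MFormula.Kv i d))))
  | kf4 (i : A) (C : Finset Q) (d : Q) :
      SLKVFm (MFormula.imp (MFormula.Kf i C d) (MFormula.K i (MFormula.Kf i C d)))
  | kf5 (i : A) (C : Finset Q) (d : Q) :
      SLKVFm (MFormula.imp (MFormula.not (MFormula.Kf i C d))
        (MFormula.K i (MFormula.not (MFormula.Kf i C d))))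
  | proj (i : A) {C : Finset Q} {c : Q} : c ∈ C → SLKVFm (MFormula.Kf i C c)
  | tran (i : A) (C D : Finset Q) (e : Q) :
      SLKVFm (MFormula.imp (MFormula.and (mConjKf P Q A i C D) (MFormula.Kf i D e))
        (MFormula.Kf i C e))
  | vf (i : A) (C : Finset Q) (d : Q) :
      SLKVFm (MFormula.imp (MFormula.and (mConjKv P Q A i C) (MFormula.Kf i C d))
        (MFormula.Kv i d))

end MAxioms

/-- Provability with modus ponens and necessitation for each agent. -/
inductive ProvM (Ax : MFormula P Q A → Prop) : MFormula P Q A → Prop where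
  | ax {φ : MFormula P Q A} : Ax φ → ProvM Ax φ
  | mp {φ ψ : MFormula P Q A} : ProvM Ax (MFormula.imp φ ψ) → ProvM Ax φ → ProvM Ax ψ
  | nec (i : A) {φ : MFormula P Q A} : ProvM Ax φ → ProvM Ax (MFormula.K i φ)

/-- Consistency: no finite conjunction of members proves `⊥`. -/
def ConsistentM (Ax : MFormula P Q A → Prop) (Γ : Set (MFormula P Q A)) : Prop :=
  ¬ ∃ L : List (MFormula P Q A),
      (∀ φ ∈ L, φ ∈ Γ) ∧ ProvM Ax (MFormula.imp (mconj L) MFormula.bot)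

/-- Maximal consistency. -/
def MCSM (Ax : MFormula P Q A → Prop) (Γ : Set (MFormula P Q A)) : Prop :=
  ConsistentM Ax Γ ∧ ∀ φ : MFormula P Q A, φ ∈ Γ ∨ MFormula.not φ ∈ Γ

/-- A function domain on `G`. -/
abbrev FnDom (G : Type) : Type := Set (Σ n : ℕ, (Fin n → G) → G)

/-- `F` contains all projection functions. -/
def hasProjections (F : FnDom G) : Prop :=
  ∀ (j : ℕ) (k : Fin j), (⟨j, fun x => x k⟩ : Σ n : ℕ, (Fin n → G) → G) ∈ F

/-- `F` is closed under function composition. -/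
def closedComp (F : FnDom G) : Prop :=
  ∀ (n m : ℕ), 0 < n → ∀ f : (Fin n → G) → G,
    (⟨n, f⟩ : Σ n : ℕ, (Fin n → G) → G) ∈ F →
    ∀ g : Fin n → (Fin m → G) → G,
      (∀ k, (⟨m, g k⟩ : Σ n : ℕ, (Fin n → G) → G) ∈ F) →
      (⟨m, fun x => f fun k => g k x⟩ : Σ n : ℕ, (Fin n → G) → G) ∈ F

/-- The tuple of values of the variables of `C`, in increasing order. -/
def tupleV [LinearOrder Q] (v : Q → G) (C : Finset Q) : Fin C.card → G :=
  fun k => v ((C.sort (· ≤ ·)).get (Fin.cast (Finset.length_sort (s := C) (· ≤ ·)).symm k))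

/-- The closure operator `cl_i^Γ`, extended to arbitrary sets of variables as the
union of its values on finite subsets. -/
def clOp (Γ : Set (MFormula P Q A)) (i : A) (S : Set Q) : Set Q :=
  {d : Q | ∃ C : Finset Q, ↑C ⊆ S ∧ MFormula.Kf i C d ∈ Γ}

/-- `hs⟨c,n⟩ = cl_i^Γ({c})`, forgetting the second coordinate. -/
def hsOp (Γ : Set (MFormula P Q A)) (i : A) : Q × Bool → Set Q :=
  fun x => clOp Γ i {x.1}

/-- The function domain `F_i(Γ)` determined by the dependency lattice of `Γ` and
`i`: all finitary `f` on `G = Q × {0,1}` with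
`hs(f(x₁,…,xₙ)) ≤ ⋁{hs(x₁),…,hs(xₙ)}` (the join of closed sets being the closure
of their union, and the empty join being `cl(∅)`). -/
def FiG (Γ : Set (MFormula P Q A)) (i : A) : FnDom (Q × Bool) :=
  {p : Σ n : ℕ, (Fin n → Q × Bool) → Q × Bool |
    ∀ x : Fin p.1 → Q × Bool,
      hsOp Γ i (p.2 x) ⊆ clOp Γ i (⋃ k : Fin p.1, hsOp Γ i (x k))}

/-! STATEMENT 17: the key property of `F_i(Γ)`: on any set `Σ` of assignments,
functionality plus `Kf_i(C,d) ∈ Γ` yields a witness in `F_i(Γ)`, while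
`Kf_i(C,d) ∉ Γ` rules out every function of `F_i(Γ)` at every `σ ∈ Σ`. -/

/-- `v_σ(d) = ⟨d, σ(d)⟩`. -/
def vSig {Q : Type} (σ : Q → Bool) : Q → Q × Bool := fun d => (d, σ d)

section Helpers
set_option linter.unusedSectionVars false

variable {P Q A : Type} [LinearOrder Q] {Γ : Set (MFormula P Q A)}

lemma taut_list (α β : MFormula P Q A) :
    IsTautM (MFormula.imp (MFormula.imp α β)
      (MFormula.imp (MFormula.and (MFormula.not β) α) MFormula.bot)) := by
  intro v h1 h2 h3
  simp [MFormula.imp, MFormula.bot, h2, h3, h1]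
  cases v α <;> cases v β <;> simp

lemma taut_top (α : MFormula P Q A) :
    IsTautM (MFormula.imp α (MFormula.imp MFormula.top α)) := by
  intro v h1 h2 h3
  simp [MFormula.imp, h2, h3, h1]

lemma taut_swap (α β γ : MFormula P Q A) :
    IsTautM (MFormula.imp (MFormula.imp (MFormula.and α β) γ)
      (MFormula.imp (MFormula.and β α) γ)) := by
  intro v h1 h2 h3
  simp [MFormula.imp, h2, h3]
  cases v α <;> cases v β <;> cases v γ <;> simp

lemma mcs_prov_list (hΓ : MCSM (SLKVFm P Q A) Γ) (L : List (MFormula P Q A))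
    {χ : MFormula P Q A} (hL : ∀ φ ∈ L, φ ∈ Γ)
    (hp : ProvM (SLKVFm P Q A) (MFormula.imp (mconj L) χ)) : χ ∈ Γ := by
  rcases hΓ with ⟨hcon, hmax⟩
  rcases hmax χ with h | h
  · exact h
  exfalso
  apply hcon
  refine ⟨MFormula.not χ :: L, ?_, ?_⟩
  · intro φ hφ
    rcases List.mem_cons.1 hφ with rfl | hφ
    · exact h
    · exact hL φ hφ
  · exact ProvM.mp (ProvM.ax (SLKVFm.taut (taut_list (mconj L) χ))) hp

lemma mcs_of_prov (hΓ : MCSM (SLKVFm P Q A) Γ) {χ : MFormula P Q A}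
    (h : ProvM (SLKVFm P Q A) χ) : χ ∈ Γ :=
  mcs_prov_list hΓ [] (by simp)
    (ProvM.mp (ProvM.ax (SLKVFm.taut (taut_top χ))) h)

lemma proj_mem (hΓ : MCSM (SLKVFm P Q A) Γ) {i : A} {C : Finset Q} {c : Q}
    (hc : c ∈ C) : MFormula.Kf i C c ∈ Γ :=
  mcs_of_prov hΓ (ProvM.ax (SLKVFm.proj i hc))

lemma tran_mem (hΓ : MCSM (SLKVFm P Q A) Γ) {i : A} {C D : Finset Q} {d : Q}
    (hD : ∀ e ∈ D, MFormula.Kf i C e ∈ Γ) (h : MFormula.Kf i D d ∈ Γ) :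
    MFormula.Kf i C d ∈ Γ := by
  refine mcs_prov_list hΓ
    (MFormula.Kf i D d :: (D.sort (· ≤ ·)).map fun e => MFormula.Kf i C e) ?_ ?_
  · intro φ hφ
    rcases List.mem_cons.1 hφ with rfl | hφ
    · exact h
    · rcases List.mem_map.1 hφ with ⟨e, he, rfl⟩
      exact hD e ((Finset.mem_sort _).1 he)
  · exact ProvM.mp
      (ProvM.ax (SLKVFm.taut (taut_swap (mConjKf P Q A i C D) (MFormula.Kf i D d)
        (MFormula.Kf i C d))))
      (ProvM.ax (SLKVFm.tran i C D d))

lemma mem_cl_self (hΓ : MCSM (SLKVFm P Q A) Γ) {i : A} {c : Q} {T : Set Q}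
    (hc : c ∈ T) : c ∈ clOp Γ i T :=
  ⟨{c}, by simpa using hc, proj_mem hΓ (Finset.mem_singleton_self c)⟩

/-- If `Kf_i(C,d) ∈ Γ` and `↑C ⊆ T` then `cl{d} ⊆ cl(T)`. -/
lemma cl_singleton_subset (hΓ : MCSM (SLKVFm P Q A) Γ) {i : A} {C : Finset Q}
    {d : Q} {T : Set Q} (hKf : MFormula.Kf i C d ∈ Γ) (hC : ↑C ⊆ T) :
    clOp Γ i {d} ⊆ clOp Γ i T := by
  rintro e ⟨C', hC', hKe⟩
  refine ⟨C, hC, tran_mem hΓ ?_ hKe⟩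
  intro x hx
  have : x = d := by simpa using hC' hx
  subst this
  exact hKf

end Helpers

theorem statement17 (P Q A : Type) [Countable P] [Infinite P] [LinearOrder Q]
    (Γ : Set (MFormula P Q A)) (hΓ : MCSM (SLKVFm P Q A) Γ) (i : A) :
    ∀ (C : Finset Q) (d : Q) (S : Set (Q → Bool)),
      ((∀ σ₁ ∈ S, ∀ σ₂ ∈ S, (∀ c ∈ C, σ₁ c = σ₂ c) → σ₁ d = σ₂ d) →
        MFormula.Kf i C d ∈ Γ →
          ∃ f : (Fin C.card → Q × Bool) → Q × Bool,
            (⟨C.card, f⟩ : Σ n : ℕ, (Fin n → Q × Bool) → Q × Bool) ∈ FiG Γ i ∧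
            ∀ σ ∈ S, vSig σ d = f (tupleV (vSig σ) C)) ∧
      (MFormula.Kf i C d ∉ Γ →
        ∀ σ ∈ S, ∀ f : (Fin C.card → Q × Bool) → Q × Bool,
          (⟨C.card, f⟩ : Σ n : ℕ, (Fin n → Q × Bool) → Q × Bool) ∈ FiG Γ i →
            vSig σ d ≠ f (tupleV (vSig σ) C)) := by
  classical
  intro C d S
  have hl : (C.sort (· ≤ ·)).length = C.card := Finset.length_sort _
  -- every element of `C` occurs at some index of the sorted tuple
  have mem_idx : ∀ c ∈ C, ∃ k : Fin C.card,
      (C.sort (· ≤ ·)).get (Fin.cast hl.symm k) = c := by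
    intro c hc
    have hc' : c ∈ C.sort (· ≤ ·) := (Finset.mem_sort _).2 hc
    obtain ⟨n, hn⟩ := List.mem_iff_get.1 hc'
    exact ⟨Fin.cast hl n, by simpa using hn⟩
  have idx_mem : ∀ k : Fin C.card,
      (C.sort (· ≤ ·)).get (Fin.cast hl.symm k) ∈ C := by
    intro k
    exact (Finset.mem_sort _).1 (List.get_mem _ _)
  constructor
  · -- part (1)
    intro hfun hKf
    refine ⟨fun x =>
      if hex : ∃ σ, σ ∈ S ∧ tupleV (vSig σ) C = x then (d, hex.choose d)
      else if hc : 0 < C.card then x ⟨0, hc⟩ else (d, false), ?_, ?_⟩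
    · -- membership in `F_i(Γ)`
      intro x
      show hsOp Γ i (if hex : ∃ σ, σ ∈ S ∧ tupleV (vSig σ) C = x then (d, hex.choose d)
          else if hc : 0 < C.card then x ⟨0, hc⟩ else (d, false)) ⊆
        clOp Γ i (⋃ k : Fin C.card, hsOp Γ i (x k))
      by_cases hex : ∃ σ, σ ∈ S ∧ tupleV (vSig σ) C = x
      · rw [dif_pos hex]
        show clOp Γ i {d} ⊆ _
        refine cl_singleton_subset hΓ hKf ?_
        intro c hc
        obtain ⟨k, hk⟩ := mem_idx c hc
        refine Set.mem_iUnion.2 ⟨k, ?_⟩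
        have hx1 : (x k).1 = c := by
          rw [← hex.choose_spec.2]
          simp only [tupleV, vSig]
          exact hk
        show c ∈ clOp Γ i {(x k).1}
        rw [hx1]
        exact mem_cl_self hΓ rfl
      · rw [dif_neg hex]
        by_cases hc : 0 < C.card
        · rw [dif_pos hc]
          rintro e ⟨C', hC', hKe⟩
          refine ⟨C', ?_, hKe⟩
          refine hC'.trans ?_
          intro q hq
          refine Set.mem_iUnion.2 ⟨⟨0, hc⟩, ?_⟩
          have : q = (x ⟨0, hc⟩).1 := hq
          rw [this]
          exact mem_cl_self hΓ rfl
        · rw [dif_neg hc]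
          show clOp Γ i {d} ⊆ _
          have hC0 : C = ∅ := Finset.card_eq_zero.1 (by omega)
          refine cl_singleton_subset hΓ hKf ?_
          simp [hC0]
    · -- agreement on `S`
      intro σ hσ
      have hex : ∃ σ', σ' ∈ S ∧ tupleV (vSig σ') C = tupleV (vSig σ) C :=
        ⟨σ, hσ, rfl⟩
      show vSig σ d = if hex : ∃ σ', σ' ∈ S ∧ tupleV (vSig σ') C = tupleV (vSig σ) C then
          (d, hex.choose d)
        else if hc : 0 < C.card then tupleV (vSig σ) C ⟨0, hc⟩ else (d, false)
      rw [dif_pos hex]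
      obtain ⟨hσ', htup⟩ := hex.choose_spec
      have hagree : ∀ c ∈ C, hex.choose c = σ c := by
        intro c hc
        obtain ⟨k, hk⟩ := mem_idx c hc
        have := congrFun htup k
        simp only [tupleV, vSig, hk] at this
        exact congrArg Prod.snd this
      have : hex.choose d = σ d := hfun _ hσ' _ hσ hagree
      simp [vSig, this]
  · -- part (2)
    intro hKf σ hσ f hf heq
    have h1 : hsOp Γ i (f (tupleV (vSig σ) C)) ⊆
        clOp Γ i (⋃ k : Fin C.card, hsOp Γ i (tupleV (vSig σ) C k)) :=
      hf (tupleV (vSig σ) C)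
    rw [← heq] at h1
    have hd : d ∈ hsOp Γ i (vSig σ d) := mem_cl_self hΓ rfl
    obtain ⟨D, hDT, hKD⟩ := h1 hd
    apply hKf
    refine tran_mem hΓ ?_ hKD
    intro e he
    have he' := hDT he
    obtain ⟨k, hk⟩ := Set.mem_iUnion.1 he'
    set c := (C.sort (· ≤ ·)).get (Fin.cast hl.symm k) with hcdef
    have hcC : c ∈ C := idx_mem k
    have hk' : e ∈ clOp Γ i {c} := by
      simpa [hsOp, tupleV, vSig, hcdef] using hk
    obtain ⟨C', hC', hKe⟩ := hk'
    refine tran_mem hΓ ?_ hKe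
    intro x hx
    have : x = c := by simpa using hC' hx
    rw [this]
    exact proj_mem hΓ hcC
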